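/- Let 0 < τ₁ ≤ τ₂ ≤ … ≤ τ_k. Define Q_k(λ) = λ^{-1}[1 − ∏_{i=1}^k (1 − λ/τᵢ)] for λ ≠ 0, extended by continuity to Q_k(0) = Σ_{i=1}^k 1/τᵢ. Then sup_{0 ≤ λ ≤ τ₁} |Q_k(λ)| = Q_k(0) = Σ_{i=1}^k 1/τᵢ. -/
import Mathlib

lemma aux_one_sub_sum_le_prod {ι : Type*} (s : Finset ι) (f : ι → ℝ)
    (h0 : ∀ i ∈ s, 0 ≤ f i) (h1 : ∀ i ∈ s, f i ≤ 1) :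
    1 - ∑ i ∈ s, f i ≤ ∏ i ∈ s, (1 - f i) := by
  induction s using Finset.cons_induction with
  | empty => simp
  | cons a s ha ih =>
    rw [Finset.sum_cons, Finset.prod_cons]
    have h0a := h0 a (Finset.mem_cons_self a s)
    have h1a := h1 a (Finset.mem_cons_self a s)
    have ih' := ih (fun i hi => h0 i (Finset.mem_cons_of_mem hi))
      (fun i hi => h1 i (Finset.mem_cons_of_mem hi))
    have hsum : 0 ≤ ∑ i ∈ s, f i := Finset.sum_nonneg fun i hi => h0 i (Finset.mem_cons_of_mem hi)
    nlinarith [mul_le_mul_of_nonneg_left ih' (sub_nonneg.2 h1a)]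

theorem multistep_filter_sup (k : ℕ) (hk : 0 < k) (τ : Fin k → ℝ)
    (hτpos : 0 < τ ⟨0, hk⟩) (hτmono : Monotone τ)
    (Q : ℝ → ℝ)
    (hQ0 : Q 0 = ∑ i, 1 / τ i)
    (hQ : ∀ l : ℝ, l ≠ 0 → Q l = l⁻¹ * (1 - ∏ i, (1 - l / τ i))) :
    (∀ l ∈ Set.Icc (0:ℝ) (τ ⟨0, hk⟩), |Q l| ≤ Q 0) ∧ Q 0 = ∑ i, 1 / τ i := by
  have hτi : ∀ i, 0 < τ i := fun i =>
    lt_of_lt_of_le hτpos (hτmono (by simp [Fin.le_def]))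
  have hle : ∀ i, τ ⟨0, hk⟩ ≤ τ i := fun i => hτmono (by simp [Fin.le_def])
  have hsum : 0 ≤ ∑ i, 1 / τ i :=
    Finset.sum_nonneg fun i _ => one_div_nonneg.2 (hτi i).le
  refine ⟨fun l hl => ?_, hQ0⟩
  obtain ⟨hl0, hl1⟩ := hl
  rcases eq_or_lt_of_le hl0 with h | h
  · rw [← h, hQ0, abs_of_nonneg hsum]
  · rw [hQ l (ne_of_gt h), hQ0]
    have h0 : ∀ i ∈ Finset.univ, (0:ℝ) ≤ l / τ i := fun i _ => div_nonneg h.le (hτi i).le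
    have h1 : ∀ i ∈ Finset.univ, l / τ i ≤ 1 := fun i _ =>
      div_le_one_of_le₀ (hl1.trans (hle i)) (hτi i).le
    have hP0 : 0 ≤ ∏ i, (1 - l / τ i) :=
      Finset.prod_nonneg fun i _ => sub_nonneg.2 (h1 i (Finset.mem_univ i))
    have hP1 : ∏ i, (1 - l / τ i) ≤ 1 :=
      Finset.prod_le_one (fun i _ => sub_nonneg.2 (h1 i (Finset.mem_univ i)))
        (fun i _ => by linarith [h0 i (Finset.mem_univ i)])
    have key := aux_one_sub_sum_le_prod Finset.univ (fun i => l / τ i) h0 h1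
    have hsumeq : ∑ i, l / τ i = l * ∑ i, 1 / τ i := by
      rw [Finset.mul_sum]; congr 1; ext i; ring
    have hnn : (0:ℝ) ≤ l⁻¹ * (1 - ∏ i, (1 - l / τ i)) := by
      have : (0:ℝ) ≤ 1 - ∏ i, (1 - l / τ i) := by linarith
      positivity
    rw [abs_of_nonneg hnn, inv_mul_le_iff₀ h]
    linarith [key, hsumeq.symm ▸ key]
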